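/- For every continuous function g : ℝ^d → ℝ, every compact set K ⊆ ℝ^d, and every ε > 0, there exist an integer m ≥ 1, vectors w_1, …, w_m ∈ ℝ^d, and scalars a_1, …, a_m, b_1, …, b_m ∈ ℝ such that the one-hidden-layer sigmoid network f(x) = Σ_{j=1}^m a_j σ(w_jᵀx + b_j) satisfies |f(x) − g(x)| ≤ ε for all x ∈ K. -/
import Mathlib

noncomputable def sigmoid (s : ℝ) : ℝ := 1 / (1 + Real.exp (-s))

lemma sigmoid_key (t C : ℝ) :
    Real.exp C * sigmoid (t - C) - Real.exp t = -(Real.exp t / (1 + Real.exp (C - t))) := by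
  unfold sigmoid
  rw [neg_sub]
  have h1 : (0:ℝ) < 1 + Real.exp (C - t) := by positivity
  field_simp
  have h2 : Real.exp (C - t) * Real.exp t = Real.exp C := by
    rw [← Real.exp_add]; ring_nf
  nlinarith [h2]

lemma sigmoid_approx (t C : ℝ) :
    |Real.exp C * sigmoid (t - C) - Real.exp t| ≤ Real.exp (2*t - C) := by
  rw [sigmoid_key, abs_neg, abs_of_nonneg (by positivity)]
  have h1 : (0:ℝ) < Real.exp (C - t) := Real.exp_pos _
  calc Real.exp t / (1 + Real.exp (C - t)) ≤ Real.exp t / Real.exp (C - t) := by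
        apply div_le_div_of_nonneg_left (Real.exp_pos t).le h1
        linarith
    _ = Real.exp (2*t - C) := by
        rw [← Real.exp_sub]; ring_nf

/-- Cybenko's universal approximation theorem for one-hidden-layer sigmoid networks. -/
theorem universal_approximation (d : ℕ) (g : (Fin d → ℝ) → ℝ) (hg : Continuous g)
    (K : Set (Fin d → ℝ)) (hK : IsCompact K) (ε : ℝ) (hε : 0 < ε) :
    ∃ (m : ℕ), 1 ≤ m ∧ ∃ (w : Fin m → Fin d → ℝ) (a b : Fin m → ℝ),
      ∀ x ∈ K, |(∑ j, a j * sigmoid (∑ i, w j i * x i + b j)) - g x| ≤ ε := by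
  haveI : CompactSpace K := isCompact_iff_compactSpace.mp hK
  -- exponential ridge functions
  set expf : (Fin d → ℝ) → C(K, ℝ) := fun w =>
    ⟨fun x => Real.exp (∑ i, w i * (x : Fin d → ℝ) i),
      Real.continuous_exp.comp (continuous_finset_sum _ fun i _ =>
        continuous_const.mul ((continuous_apply i).comp continuous_subtype_val))⟩ with hexpf
  have hmul : ∀ w v, expf w * expf v = expf (w + v) := by
    intro w v
    ext x
    simp only [hexpf, ContinuousMap.mul_apply, ContinuousMap.coe_mk, ← Real.exp_add,
      ← Finset.sum_add_distrib, Pi.add_apply, add_mul]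
  have hone : expf 0 = 1 := by
    ext x
    simp [hexpf]
  let E : Submonoid C(K, ℝ) :=
    { carrier := Set.range expf
      mul_mem' := by rintro _ _ ⟨w, rfl⟩ ⟨v, rfl⟩; exact ⟨w + v, (hmul w v).symm⟩
      one_mem' := ⟨0, hone⟩ }
  set A : Subalgebra ℝ C(K, ℝ) := Algebra.adjoin ℝ (Set.range expf) with hA
  have hsep : A.SeparatesPoints := by
    intro x y hxy
    refine ⟨expf ((x : Fin d → ℝ) - (y : Fin d → ℝ)), ⟨?_, ?_⟩⟩
    · exact Set.mem_image_of_mem _ (Algebra.subset_adjoin ⟨_, rfl⟩)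
    · simp only [hexpf, ContinuousMap.coe_mk]
      intro h
      rw [Real.exp_eq_exp] at h
      apply hxy
      ext1
      by_contra hne
      have hpos : 0 < ∑ i, ((x : Fin d → ℝ) i - (y : Fin d → ℝ) i)^2 := by
        have : ∃ i, (x : Fin d → ℝ) i ≠ (y : Fin d → ℝ) i := by
          by_contra hall
          push_neg at hall
          exact hne (funext hall)
        obtain ⟨i, hi⟩ := this
        apply Finset.sum_pos'
        · intro j _; positivity
        · refine ⟨i, Finset.mem_univ i, ?_⟩
          have h0 : (x : Fin d → ℝ) i - (y : Fin d → ℝ) i ≠ 0 := sub_ne_zero.mpr hi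
          positivity
      have : ∑ i, ((x:Fin d → ℝ) - (y:Fin d → ℝ)) i * (x : Fin d → ℝ) i
           - ∑ i, ((x:Fin d → ℝ) - (y:Fin d → ℝ)) i * (y : Fin d → ℝ) i
           = ∑ i, ((x : Fin d → ℝ) i - (y : Fin d → ℝ) i)^2 := by
        rw [← Finset.sum_sub_distrib]
        congr 1; ext i; simp [Pi.sub_apply]; ring
      rw [h] at this
      simp at this
      linarith
  have htop : A.topologicalClosure = ⊤ :=
    ContinuousMap.subalgebra_topologicalClosure_eq_top_of_separatesPoints A hsep
  -- restrict g to K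
  set gK : C(K, ℝ) := ⟨fun x => g (x : Fin d → ℝ), hg.comp continuous_subtype_val⟩ with hgK
  have hmem : gK ∈ closure (A : Set C(K, ℝ)) := by
    have : gK ∈ A.topologicalClosure := by rw [htop]; trivial
    exact this
  obtain ⟨f, hfA, hdist⟩ := Metric.mem_closure_iff.mp hmem (ε/2) (by linarith)
  -- f is a finite linear combination of exponentials
  have hspan : f ∈ Submodule.span ℝ (Set.range expf) := by
    have h1 : Subalgebra.toSubmodule A = Submodule.span ℝ (Submonoid.closure (Set.range expf) : Set C(K,ℝ)) :=
      Algebra.adjoin_eq_span ℝ (Set.range expf)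
    have h2 : Submonoid.closure (Set.range expf) = E := Submonoid.closure_eq E
    rw [h2] at h1
    have : f ∈ Subalgebra.toSubmodule A := hfA
    rw [h1] at this
    exact this
  obtain ⟨n, c, hfun, hsum⟩ := Submodule.mem_span_set'.mp hspan
  choose wfun hw using fun j => (hfun j).2
  -- bound on K
  obtain ⟨r, hr⟩ := hK.isBounded.subset_closedBall 0
  set R : ℝ := max r 0 with hR
  have hxR : ∀ x ∈ K, ∀ i, |x i| ≤ R := by
    intro x hx i
    have h1 : ‖x‖ ≤ r := by
      have := hr hx
      rwa [Metric.mem_closedBall, dist_zero_right] at this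
    calc |x i| = ‖x i‖ := rfl
      _ ≤ ‖x‖ := norm_le_pi_norm x i
      _ ≤ R := le_trans h1 (le_max_left _ _)
  set M : Fin n → ℝ := fun j => (∑ i, |wfun j i|) * R with hM
  have htM : ∀ j, ∀ x ∈ K, |∑ i, wfun j i * x i| ≤ M j := by
    intro j x hx
    calc |∑ i, wfun j i * x i| ≤ ∑ i, |wfun j i * x i| := Finset.abs_sum_le_sum_abs _ _
      _ ≤ ∑ i, |wfun j i| * R := by
          apply Finset.sum_le_sum
          intro i _
          rw [abs_mul]
          exact mul_le_mul_of_nonneg_left (hxR x hx i) (abs_nonneg _)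
      _ = M j := by simp only [hM]; rw [Finset.sum_mul]
  set δ : ℝ := ε / (2 * (n + 1)) with hδ
  have hδpos : 0 < δ := by positivity
  set Cb : Fin n → ℝ := fun j => 2 * M j - Real.log (δ / (|c j| + 1)) with hCb
  have hterm : ∀ j, ∀ x ∈ K,
      |c j * Real.exp (Cb j) * sigmoid (∑ i, wfun j i * x i - Cb j)
        - c j * Real.exp (∑ i, wfun j i * x i)| ≤ δ := by
    intro j x hx
    set t : ℝ := ∑ i, wfun j i * x i with ht
    have h1 : |Real.exp (Cb j) * sigmoid (t - Cb j) - Real.exp t| ≤ Real.exp (2*t - Cb j) :=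
      sigmoid_approx t (Cb j)
    have h2 : Real.exp (2*t - Cb j) ≤ Real.exp (2 * M j - Cb j) := by
      apply Real.exp_le_exp.mpr
      have := htM j x hx
      have : t ≤ M j := le_trans (le_abs_self t) this
      linarith
    have h3 : Real.exp (2 * M j - Cb j) = δ / (|c j| + 1) := by
      rw [hCb]
      have : 2 * M j - (2 * M j - Real.log (δ / (|c j| + 1))) = Real.log (δ / (|c j| + 1)) := by ring
      rw [this, Real.exp_log (by positivity)]
    calc |c j * Real.exp (Cb j) * sigmoid (t - Cb j) - c j * Real.exp t|
        = |c j| * |Real.exp (Cb j) * sigmoid (t - Cb j) - Real.exp t| := by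
          rw [← abs_mul]; congr 1; ring
      _ ≤ |c j| * (δ / (|c j| + 1)) := by
          apply mul_le_mul_of_nonneg_left _ (abs_nonneg _)
          rw [← h3]; exact le_trans h1 h2
      _ ≤ δ := by
          rw [div_eq_inv_mul, ← mul_assoc]
          have h4 : |c j| * (|c j| + 1)⁻¹ ≤ 1 := by
            rw [mul_inv_le_iff₀ (by positivity)]
            linarith [abs_nonneg (c j)]
          nlinarith [hδpos.le]
  -- assemble the network (pad with one zero term to ensure m ≥ 1)
  refine ⟨n + 1, le_add_self, Fin.snoc wfun 0,
    Fin.snoc (fun j => c j * Real.exp (Cb j)) 0, Fin.snoc (fun j => -(Cb j)) 0, ?_⟩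
  intro x hx
  have hfx : f ⟨x, hx⟩ = ∑ j, c j * Real.exp (∑ i, wfun j i * x i) := by
    have := congrArg (fun h => ContinuousMap.toFun h ⟨x, hx⟩) hsum
    simp only [ContinuousMap.toFun_eq_coe] at this
    rw [← this]
    rw [ContinuousMap.coe_sum]  -- may need adjusting
    simp only [Finset.sum_apply, ContinuousMap.coe_smul, Pi.smul_apply, smul_eq_mul]
    congr 1
    ext j
    congr 1
    have := hw j
    rw [← this]
    simp [hexpf]
  have hnet : (∑ j : Fin (n+1), (Fin.snoc (fun j => c j * Real.exp (Cb j)) 0 : Fin (n+1) → ℝ) j *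
      sigmoid (∑ i, (Fin.snoc wfun 0 : Fin (n+1) → Fin d → ℝ) j i * x i + (Fin.snoc (fun j => -(Cb j)) 0 : Fin (n+1) → ℝ) j))
      = ∑ j : Fin n, c j * Real.exp (Cb j) * sigmoid (∑ i, wfun j i * x i - Cb j) := by
    rw [Fin.sum_univ_castSucc]
    simp only [Fin.snoc_castSucc, Fin.snoc_last, Pi.zero_apply, zero_mul, add_zero,
      ← sub_eq_add_neg]
  rw [hnet]
  have hbound1 : |(∑ j : Fin n, c j * Real.exp (Cb j) * sigmoid (∑ i, wfun j i * x i - Cb j))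
      - f ⟨x, hx⟩| ≤ n * δ := by
    rw [hfx, ← Finset.sum_sub_distrib]
    calc |∑ j, (c j * Real.exp (Cb j) * sigmoid (∑ i, wfun j i * x i - Cb j)
            - c j * Real.exp (∑ i, wfun j i * x i))|
        ≤ ∑ j, |c j * Real.exp (Cb j) * sigmoid (∑ i, wfun j i * x i - Cb j)
            - c j * Real.exp (∑ i, wfun j i * x i)| := Finset.abs_sum_le_sum_abs _ _
      _ ≤ ∑ _j : Fin n, δ := Finset.sum_le_sum (fun j _ => hterm j x hx)
      _ = n * δ := by rw [Finset.sum_const, Finset.card_univ, Fintype.card_fin, nsmul_eq_mul]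
  have hbound2 : |f ⟨x, hx⟩ - g x| < ε / 2 := by
    have h1 : dist (gK ⟨x, hx⟩) (f ⟨x, hx⟩) ≤ dist gK f := ContinuousMap.dist_apply_le_dist _
    have h2 : gK ⟨x, hx⟩ = g x := rfl
    rw [Real.dist_eq, h2] at h1
    rw [abs_sub_comm]
    exact lt_of_le_of_lt h1 hdist
  have hnδ : (n : ℝ) * δ ≤ ε / 2 := by
    rw [hδ, mul_div_assoc', div_le_div_iff₀ (by positivity) (by norm_num)]
    nlinarith [hε.le, Nat.cast_nonneg (α := ℝ) n]
  calc |(∑ j : Fin n, c j * Real.exp (Cb j) * sigmoid (∑ i, wfun j i * x i - Cb j)) - g x|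
      ≤ |(∑ j : Fin n, c j * Real.exp (Cb j) * sigmoid (∑ i, wfun j i * x i - Cb j)) - f ⟨x, hx⟩|
        + |f ⟨x, hx⟩ - g x| := abs_sub_le _ _ _
    _ ≤ n * δ + ε / 2 := add_le_add hbound1 hbound2.le
    _ ≤ ε / 2 + ε / 2 := by linarith
    _ = ε := by ring
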